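/- Let H and 𝒦 be separable complex Hilbert spaces, U : ℝ → U(H) a strongly continuous unitary representation, Λ the translation representation (Λ(t)Φ)(s) = Φ(s−t) on L²(ℝ;𝒦), W : H → L²(ℝ;𝒦) an isometry with W U(t) = Λ(t) W and WW*Λ(t) = Λ(t)WW* for all t, β > 0, (ψ_n) an orthonormal basis of 𝒦, Ψ_{K,n}(s) = Φ_K^{(β)}(s)·ψ_n with Φ_K^{(β)}(s) = (2π)^{-1/2}∫_K e^{-isξ}e^{-βξ/2}dξ, and φ_β(x) = sup_{K,N} Σ_{n=1}^N ∫_ℝ ⟨W*Ψ_{K,n}, U(t)xU(t)*W*Ψ_{K,n}⟩ dt for positive x. Set S := sup over compact K ⊆ ℝ and N ∈ ℕ of Σ_{n=1}^{N} ‖W*Ψ_{K,n}‖². Then: (i) φ_β(a*a) ≤ C_a² · S for every a ∈ B(H) with C_a < ∞; (ii) for every f ∈ L¹(ℝ) ∩ L^∞(ℝ) with f ≥ 0, φ_β(W* M_f W) = ‖f‖_{L¹} · S; consequently (iii) φ_β takes finite values on 𝒫 = {a*a : C_a < ∞} if and only if S < ∞. -/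

import Mathlib

open MeasureTheory
open scoped ENNReal NNReal

local notation "⟪" x ", " y "⟫_ℂ" => @inner ℂ _ _ x y

noncomputable section

/-- `Csq U a` is the square `C_a²` of
`C_a = (sup_{‖ψ‖=1} ∫_ℝ ‖a U(t)* ψ‖² dt)^{1/2} ∈ [0,∞]`. -/
def Csq {H : Type*} [NormedAddCommGroup H] [InnerProductSpace ℂ H] [CompleteSpace H]
    (U : ℝ → (H →L[ℂ] H)) (a : H →L[ℂ] H) : ℝ≥0∞ :=
  ⨆ ψ : {ψ : H // ‖ψ‖ = 1}, ∫⁻ t : ℝ, (‖a (star (U t) (ψ : H))‖₊ : ℝ≥0∞) ^ 2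

/-- The set `𝒫 = {a*a : C_a < ∞}` of positive `t`-integrable operators. -/
def posTIntegrable {H : Type*} [NormedAddCommGroup H] [InnerProductSpace ℂ H] [CompleteSpace H]
    (U : ℝ → (H →L[ℂ] H)) : Set (H →L[ℂ] H) :=
  {x | ∃ a : H →L[ℂ] H, Csq U a ≠ ⊤ ∧ x = star a * a}

/-- `phiFn β A` is `Φ_A^{(β)}(s) = (2π)^{-1/2} ∫_A e^{-isξ} e^{-βξ/2} dξ`. -/
def phiFn (β : ℝ) (A : Set ℝ) (s : ℝ) : ℂ :=
  (((Real.sqrt (2 * Real.pi))⁻¹ : ℝ) : ℂ) *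
    ∫ ξ in A, Complex.exp (-(Complex.I * (s : ℂ) * (ξ : ℂ)) - ((β : ℂ) * (ξ : ℂ)) / 2)

/-- The weight `φ_β(x) = sup_{K,N} Σ_{n<N} ∫_ℝ ⟨W*Ψ_{K,n}, U(t) x U(t)* W*Ψ_{K,n}⟩ dt`,
expressed through the vectors `θ A n = W*Ψ_{A,n}`. -/
def weightPhi {H : Type*} [NormedAddCommGroup H] [InnerProductSpace ℂ H] [CompleteSpace H]
    (U : ℝ → (H →L[ℂ] H)) (θ : Set ℝ → ℕ → H) (x : H →L[ℂ] H) : ℝ≥0∞ :=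
  ⨆ (A : {A : Set ℝ // IsCompact A}) (N : ℕ), ∑ n ∈ Finset.range N,
    ∫⁻ t : ℝ, ENNReal.ofReal (⟪θ A.1 n, (U t * x * star (U t)) (θ A.1 n)⟫_ℂ).re

/-- `S = sup_{K,N} Σ_{n<N} ‖W*Ψ_{K,n}‖²` (in the paper, `∫_ℝ e^{-βξ} m_{U_R}(ξ) dξ`). -/
def specWeight {H : Type*} [NormedAddCommGroup H] [InnerProductSpace ℂ H] [CompleteSpace H]
    (θ : Set ℝ → ℕ → H) : ℝ≥0∞ :=
  ⨆ (A : {A : Set ℝ // IsCompact A}) (N : ℕ), ∑ n ∈ Finset.range N,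
    (‖θ A.1 n‖₊ : ℝ≥0∞) ^ 2


set_option linter.unusedSectionVars false
set_option maxHeartbeats 1000000
set_option synthInstance.maxHeartbeats 400000

section Helpers

variable {H F : Type*}
    [NormedAddCommGroup H] [InnerProductSpace ℂ H] [CompleteSpace H]
    [NormedAddCommGroup F] [InnerProductSpace ℂ F] [CompleteSpace F]
    [SecondCountableTopology F]

private lemma lintegral_nnnorm_sq_eq (g : Lp F 2 (volume : Measure ℝ)) :
    ∫⁻ u : ℝ, (‖g u‖₊ : ℝ≥0∞) ^ 2 = (‖g‖₊ : ℝ≥0∞) ^ 2 := by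
  have h1 : (‖g‖₊ : ℝ≥0∞) = eLpNorm g 2 volume := by
    rw [Lp.nnnorm_def, ENNReal.coe_toNNReal (Lp.eLpNorm_ne_top g)]
  rw [h1, eLpNorm_eq_lintegral_rpow_enorm_toReal (by norm_num) (by norm_num)]
  rw [← ENNReal.rpow_natCast _ 2, ← ENNReal.rpow_mul]
  norm_num
  simp only [enorm_eq_nnnorm]

private lemma star_U_eq (U : ℝ → (H →L[ℂ] H)) (hU0 : U 0 = 1)
    (hUadd : ∀ s t, U (s+t) = U s * U t) (hUuni : ∀ t, U t ∈ unitary (H →L[ℂ] H)) (t : ℝ) :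
    star (U t) = U (-t) := by
  have h1 : U t * U (-t) = 1 := by rw [← hUadd]; simp [hU0]
  have h2 : star (U t) * U t = 1 := (hUuni t).1
  calc star (U t) = star (U t) * (U t * U (-t)) := by rw [h1, mul_one]
    _ = (star (U t) * U t) * U (-t) := by rw [mul_assoc]
    _ = U (-t) := by rw [h2, one_mul]

private lemma core_lintegral (U : ℝ → (H →L[ℂ] H))
    (hU0 : U 0 = 1) (hUadd : ∀ s t : ℝ, U (s + t) = U s * U t)
    (hUuni : ∀ t : ℝ, U t ∈ unitary (H →L[ℂ] H))
    (Λ : ℝ → (Lp F 2 (volume : Measure ℝ) →L[ℂ] Lp F 2 (volume : Measure ℝ)))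
    (hΛ : ∀ (t : ℝ) (Φ : Lp F 2 (volume : Measure ℝ)),
        (Λ t Φ : ℝ → F) =ᵐ[volume] fun s => Φ (s - t))
    (W : H →L[ℂ] Lp F 2 (volume : Measure ℝ))
    (hWiso : ∀ ψ : H, ‖W ψ‖ = ‖ψ‖)
    (hWU : ∀ t : ℝ, W ∘L U t = Λ t ∘L W)
    (f : ℝ → ℝ) (hfm : Measurable f) (hf0 : 0 ≤ f) (hfi : Integrable f volume)
    (C : ℝ) (hfb : ∀ s, |f s| ≤ C)
    (Ef : H →L[ℂ] H)
    (hEf : ∀ ψ ψ' : H, ⟪ψ, Ef ψ'⟫_ℂ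
        = ∫ s : ℝ, (f s : ℂ) * ⟪(W ψ : Lp F 2 (volume : Measure ℝ)) s,
            (W ψ' : Lp F 2 (volume : Measure ℝ)) s⟫_ℂ)
    (ψ : H) :
    ∫⁻ t : ℝ, ENNReal.ofReal (⟪ψ, (U t * Ef * star (U t)) ψ⟫_ℂ).re
      = ENNReal.ofReal (∫ s : ℝ, f s) * (‖ψ‖₊ : ℝ≥0∞) ^ 2 := by
  set h : ℝ → F := ⇑(W ψ) with hh
  have hsm : StronglyMeasurable h := Lp.stronglyMeasurable (W ψ)
  have step1 : ∀ t : ℝ, (⟪ψ, (U t * Ef * star (U t)) ψ⟫_ℂ).re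
      = ∫ s : ℝ, f s * ‖h (s + t)‖ ^ 2 := by
    intro t
    have e1 : (U t * Ef * star (U t)) ψ = (U t) (Ef (star (U t) ψ)) := rfl
    have e2 : ⟪ψ, (U t) (Ef (star (U t) ψ))⟫_ℂ = ⟪star (U t) ψ, Ef (star (U t) ψ)⟫_ℂ := by
      rw [ContinuousLinearMap.star_eq_adjoint, ContinuousLinearMap.adjoint_inner_left]
    have e3 : W (star (U t) ψ) = Λ (-t) (W ψ) := by
      rw [star_U_eq U hU0 hUadd hUuni t]
      have := congrArg (fun T : H →L[ℂ] Lp F 2 (volume : Measure ℝ) => T ψ) (hWU (-t))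
      simpa using this
    have e4 : (W (star (U t) ψ) : ℝ → F) =ᵐ[volume] fun s => h (s + t) := by
      rw [e3]
      filter_upwards [hΛ (-t) (W ψ)] with s hs
      rw [hs, sub_neg_eq_add]
    rw [e1, e2, hEf]
    have e5 : ∫ s : ℝ, (f s : ℂ) * ⟪(W (star (U t) ψ) : ℝ → F) s,
        (W (star (U t) ψ) : ℝ → F) s⟫_ℂ = ∫ s : ℝ, ((f s * ‖h (s + t)‖ ^ 2 : ℝ) : ℂ) := by
      apply integral_congr_ae
      filter_upwards [e4] with s hs
      rw [hs]
      rw [show ⟪h (s+t), h (s+t)⟫_ℂ = ((‖h (s+t)‖^2 : ℝ) : ℂ) by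
        exact_mod_cast inner_self_eq_norm_sq_to_K (h (s+t))]
      norm_cast
    rw [e5, show (∫ s : ℝ, ((f s * ‖h (s + t)‖ ^ 2 : ℝ) : ℂ)) =
      (((∫ s : ℝ, f s * ‖h (s + t)‖ ^ 2 : ℝ)) : ℂ) from integral_ofReal, Complex.ofReal_re]
  have hh2 : Integrable (fun u : ℝ => ‖h u‖ ^ 2) volume := by
    have := (Lp.memLp (W ψ)).integrable_norm_rpow (by norm_num) (by norm_num)
    have h2 : ((2 : ℝ≥0∞)).toReal = (2 : ℝ) := by norm_num
    rw [h2] at this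
    simpa [Real.rpow_natCast] using this
  have hint : ∀ t : ℝ, Integrable (fun s : ℝ => f s * ‖h (s + t)‖ ^ 2) volume := by
    intro t
    exact (hh2.comp_add_right t).bdd_mul hfm.aestronglyMeasurable (c := C) (Filter.Eventually.of_forall fun s => hfb s)
  have step2 : ∀ t : ℝ, ENNReal.ofReal (∫ s : ℝ, f s * ‖h (s + t)‖ ^ 2)
      = ∫⁻ s : ℝ, ENNReal.ofReal (f s) * (‖h (s + t)‖₊ : ℝ≥0∞) ^ 2 := by
    intro t
    rw [ofReal_integral_eq_lintegral_ofReal (hint t)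
      (Filter.Eventually.of_forall fun s => mul_nonneg (hf0 s) (sq_nonneg _))]
    congr 1
    ext s
    rw [ENNReal.ofReal_mul (hf0 s), ENNReal.ofReal_pow (norm_nonneg _),
      ofReal_norm, enorm_eq_nnnorm]
  simp_rw [step1, step2]
  have hmeas2 : StronglyMeasurable fun p : ℝ × ℝ => h (p.2 + p.1) :=
    hsm.comp_measurable (measurable_snd.add measurable_fst)
  have hmeasF : Measurable (Function.uncurry fun t s : ℝ =>
      ENNReal.ofReal (f s) * (‖h (s + t)‖₊ : ℝ≥0∞) ^ 2) := by
    show Measurable fun p : ℝ × ℝ => ENNReal.ofReal (f p.2) * (‖h (p.2 + p.1)‖₊ : ℝ≥0∞) ^ 2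
    refine Measurable.mul (f := fun p : ℝ × ℝ => ENNReal.ofReal (f p.2))
      (g := fun p : ℝ × ℝ => (‖h (p.2 + p.1)‖₊ : ℝ≥0∞) ^ 2) ?_ ?_
    · exact hfm.ennreal_ofReal.comp measurable_snd
    · exact (hmeas2.nnnorm.measurable.coe_nnreal_ennreal.pow_const 2)
  rw [lintegral_lintegral_swap hmeasF.aemeasurable]
  have inner_eq : ∀ s : ℝ, ∫⁻ t : ℝ, ENNReal.ofReal (f s) * (‖h (s + t)‖₊ : ℝ≥0∞) ^ 2
      = ENNReal.ofReal (f s) * (‖ψ‖₊ : ℝ≥0∞) ^ 2 := by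
    intro s
    have hm : Measurable fun t : ℝ => (‖h (s + t)‖₊ : ℝ≥0∞) ^ 2 := by
      exact ((hsm.comp_measurable
        (measurable_const.add measurable_id)).nnnorm.measurable.coe_nnreal_ennreal.pow_const 2)
    rw [lintegral_const_mul _ hm]
    congr 1
    have : ∀ t : ℝ, (‖h (s + t)‖₊ : ℝ≥0∞) ^ 2 = (fun u : ℝ => (‖h u‖₊ : ℝ≥0∞) ^ 2) (t + s) := by
      intro t; rw [add_comm]
    simp_rw [this]
    rw [lintegral_add_right_eq_self (fun u : ℝ => (‖h u‖₊ : ℝ≥0∞) ^ 2) s]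
    rw [lintegral_nnnorm_sq_eq (W ψ)]
    have : ‖W ψ‖₊ = ‖ψ‖₊ := by
      ext; simp [coe_nnnorm, hWiso ψ]
    rw [this]
  simp_rw [inner_eq]
  rw [lintegral_mul_const _ hfm.ennreal_ofReal,
    ← ofReal_integral_eq_lintegral_ofReal hfi (Filter.Eventually.of_forall hf0)]

private lemma integrand_eq (U : ℝ → (H →L[ℂ] H)) (a : H →L[ℂ] H) (v : H) (t : ℝ) :
    ENNReal.ofReal (⟪v, (U t * (star a * a) * star (U t)) v⟫_ℂ).re
      = (‖a (star (U t) v)‖₊ : ℝ≥0∞) ^ 2 := by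
  have e1 : (U t * (star a * a) * star (U t)) v = (U t) ((star a) (a (star (U t) v))) := rfl
  have e2 : ⟪v, (U t) ((star a) (a (star (U t) v)))⟫_ℂ
      = ⟪a (star (U t) v), a (star (U t) v)⟫_ℂ := by
    rw [show (star (U t) : H →L[ℂ] H) = ContinuousLinearMap.adjoint (U t) from rfl,
      ← ContinuousLinearMap.adjoint_inner_left,
      show (star a : H →L[ℂ] H) = ContinuousLinearMap.adjoint a from rfl,
      ContinuousLinearMap.adjoint_inner_right]
  rw [e1, e2]
  have hre := inner_self_eq_norm_sq (𝕜 := ℂ) (a (star (U t) v))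
  rw [RCLike.re_to_complex] at hre
  rw [hre]
  rw [ENNReal.ofReal_pow (norm_nonneg _), ofReal_norm, enorm_eq_nnnorm]

private lemma csq_bound (U : ℝ → (H →L[ℂ] H)) (a : H →L[ℂ] H) (ψ : H) :
    ∫⁻ t : ℝ, (‖a (star (U t) ψ)‖₊ : ℝ≥0∞) ^ 2 ≤ Csq U a * (‖ψ‖₊ : ℝ≥0∞) ^ 2 := by
  by_cases hψ : ψ = 0
  · simp [hψ]
  · have hc : ‖ψ‖ ≠ 0 := norm_ne_zero_iff.2 hψ
    set ψ' : H := ((‖ψ‖ : ℂ))⁻¹ • ψ with hψ'def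
    have hψ' : ‖ψ'‖ = 1 := by
      rw [hψ'def, norm_smul, norm_inv]
      simp only [Complex.norm_real, Real.norm_eq_abs, abs_of_nonneg (norm_nonneg ψ)]
      field_simp
    have hpsi : ψ = ((‖ψ‖ : ℝ) : ℂ) • ψ' := by
      rw [hψ'def, smul_smul, mul_inv_cancel₀ (by exact_mod_cast hc), one_smul]
    have hrw : ∀ t : ℝ, (‖a (star (U t) ψ)‖₊ : ℝ≥0∞) ^ 2
        = (‖ψ‖₊ : ℝ≥0∞) ^ 2 * (‖a (star (U t) ψ')‖₊ : ℝ≥0∞) ^ 2 := by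
      intro t
      conv_lhs => rw [hpsi]
      rw [_root_.map_smul, _root_.map_smul, nnnorm_smul]
      have hn : ‖((‖ψ‖ : ℝ) : ℂ)‖₊ = ‖ψ‖₊ := by
        ext
        simp only [coe_nnnorm, Complex.norm_real, Real.norm_eq_abs,
          abs_of_nonneg (norm_nonneg ψ)]
      rw [hn]
      push_cast
      ring
    simp_rw [hrw]
    rw [lintegral_const_mul' _ _ (by simp)]
    rw [mul_comm (Csq U a)]
    exact mul_le_mul_right (le_iSup (fun ψ0 : {ψ0 : H // ‖ψ0‖ = 1} =>
      ∫⁻ t : ℝ, (‖a (star (U t) (ψ0 : H))‖₊ : ℝ≥0∞) ^ 2) ⟨ψ', hψ'⟩) _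

private lemma mulOp_mem (f : ℝ → ℝ) (hfm : Measurable f) (hfb : ∀ s, |f s| ≤ 1)
    (u : Lp F 2 (volume : Measure ℝ)) :
    MemLp (fun s => (f s : ℂ) • u s) 2 (volume : Measure ℝ) := by
  refine MemLp.of_le (Lp.memLp u) ?_ ?_
  · exact ((Complex.measurable_ofReal.comp hfm).aestronglyMeasurable).smul
      (Lp.aestronglyMeasurable u)
  · filter_upwards with s
    rw [norm_smul]
    calc ‖(f s : ℂ)‖ * ‖u s‖ ≤ 1 * ‖u s‖ := by
          gcongr
          simpa [Complex.norm_real] using hfb s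
      _ = ‖u s‖ := one_mul _

private def mulOpL (f : ℝ → ℝ) (hfm : Measurable f) (hfb : ∀ s, |f s| ≤ 1) :
    Lp F 2 (volume : Measure ℝ) →ₗ[ℂ] Lp F 2 (volume : Measure ℝ) where
  toFun u := (mulOp_mem f hfm hfb u).toLp _
  map_add' u v := by
    apply Lp.ext
    filter_upwards [MemLp.coeFn_toLp (mulOp_mem f hfm hfb (u + v)),
      MemLp.coeFn_toLp (mulOp_mem f hfm hfb u), MemLp.coeFn_toLp (mulOp_mem f hfm hfb v),
      Lp.coeFn_add u v,
      Lp.coeFn_add ((mulOp_mem f hfm hfb u).toLp _) ((mulOp_mem f hfm hfb v).toLp _)]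
      with s h1 h2 h3 h4 h5
    rw [h1, h5, Pi.add_apply, h2, h3, h4, Pi.add_apply, smul_add]
  map_smul' c u := by
    apply Lp.ext
    filter_upwards [MemLp.coeFn_toLp (mulOp_mem f hfm hfb (c • u)),
      MemLp.coeFn_toLp (mulOp_mem f hfm hfb u),
      Lp.coeFn_smul c u, Lp.coeFn_smul c ((mulOp_mem f hfm hfb u).toLp _)]
      with s h1 h2 h3 h4
    rw [h1, RingHom.id_apply, h4, Pi.smul_apply, h2, h3, Pi.smul_apply, smul_comm]

private def mulOp (f : ℝ → ℝ) (hfm : Measurable f) (hfb : ∀ s, |f s| ≤ 1) :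
    Lp F 2 (volume : Measure ℝ) →L[ℂ] Lp F 2 (volume : Measure ℝ) :=
  LinearMap.mkContinuous (mulOpL f hfm hfb) 1 (by
    intro u
    rw [one_mul]
    show ‖(mulOp_mem f hfm hfb u).toLp _‖ ≤ ‖u‖
    rw [Lp.norm_toLp, Lp.norm_def]
    apply ENNReal.toReal_mono (Lp.eLpNorm_ne_top u)
    apply eLpNorm_mono_ae
    filter_upwards with s
    rw [norm_smul]
    calc ‖(f s : ℂ)‖ * ‖u s‖ ≤ 1 * ‖u s‖ := by
          gcongr
          simpa [Complex.norm_real] using hfb s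
      _ = ‖u s‖ := one_mul _)

private lemma mulOp_coeFn (f : ℝ → ℝ) (hfm : Measurable f) (hfb : ∀ s, |f s| ≤ 1)
    (u : Lp F 2 (volume : Measure ℝ)) :
    (mulOp (F := F) f hfm hfb u : ℝ → F) =ᵐ[volume] fun s => (f s : ℂ) • u s := by
  have : mulOp (F := F) f hfm hfb u = (mulOp_mem f hfm hfb u).toLp _ := rfl
  rw [this]
  exact MemLp.coeFn_toLp _

end Helpers

/-- In the dilated QRF setting, with
`S := sup_{K,N} Σ_{n<N} ‖W*Ψ_{K,n}‖²`: (i) `φ_β(a*a) ≤ C_a²·S` whenever `C_a < ∞`;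
(ii) `φ_β(W* M_f W) = ‖f‖_{L¹}·S` for every `0 ≤ f ∈ L¹ ∩ L^∞`; and consequently
(iii) `φ_β` is finite on `𝒫` if and only if `S < ∞`. -/
theorem stmt15 {H F : Type*}
    [NormedAddCommGroup H] [InnerProductSpace ℂ H] [CompleteSpace H] [SecondCountableTopology H]
    [NormedAddCommGroup F] [InnerProductSpace ℂ F] [CompleteSpace F] [SecondCountableTopology F]
    (U : ℝ → (H →L[ℂ] H))
    (hU0 : U 0 = 1) (hUadd : ∀ s t : ℝ, U (s + t) = U s * U t)
    (hUuni : ∀ t : ℝ, U t ∈ unitary (H →L[ℂ] H))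
    (hUcont : ∀ ψ : H, Continuous fun t : ℝ => U t ψ)
    (Λ : ℝ → (Lp F 2 (volume : Measure ℝ) →L[ℂ] Lp F 2 (volume : Measure ℝ)))
    (hΛ : ∀ (t : ℝ) (Φ : Lp F 2 (volume : Measure ℝ)),
        (Λ t Φ : ℝ → F) =ᵐ[volume] fun s => Φ (s - t))
    (W : H →L[ℂ] Lp F 2 (volume : Measure ℝ))
    (hWiso : ∀ ψ : H, ‖W ψ‖ = ‖ψ‖)
    (hWU : ∀ t : ℝ, W ∘L U t = Λ t ∘L W)
    (hWcomm : ∀ t : ℝ,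
        (W ∘L ContinuousLinearMap.adjoint W) ∘L Λ t
          = Λ t ∘L (W ∘L ContinuousLinearMap.adjoint W))
    (β : ℝ) (hβ : 0 < β)
    (e : ℕ → F)
    (he_orth : ∀ m n : ℕ, m ≠ n → ⟪e m, e n⟫_ℂ = 0)
    (he_norm : ∀ n : ℕ, ‖e n‖ = 1 ∨ e n = 0)
    (he_total : (Submodule.span ℂ (Set.range e)).topologicalClosure = ⊤)
    (θ : Set ℝ → ℕ → H)
    (hθ : ∀ A : Set ℝ, IsCompact A → ∀ (n : ℕ) (ψ : H),
        ⟪θ A n, ψ⟫_ℂ = ∫ s : ℝ, ⟪phiFn β A s • e n, (W ψ : Lp F 2 (volume : Measure ℝ)) s⟫_ℂ) :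
    (∀ a : H →L[ℂ] H, Csq U a ≠ ⊤ →
        weightPhi U θ (star a * a) ≤ Csq U a * specWeight θ) ∧
    (∀ f : ℝ → ℝ, Measurable f → 0 ≤ f → Integrable f → (∃ C : ℝ, ∀ s, |f s| ≤ C) →
        ∀ Ef : H →L[ℂ] H,
          (∀ ψ ψ' : H, ⟪ψ, Ef ψ'⟫_ℂ
              = ∫ s : ℝ, (f s : ℂ) * ⟪(W ψ : Lp F 2 (volume : Measure ℝ)) s,
                  (W ψ' : Lp F 2 (volume : Measure ℝ)) s⟫_ℂ) →
          weightPhi U θ Ef = ENNReal.ofReal (∫ s : ℝ, f s) * specWeight θ) ∧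
    ((∀ x ∈ posTIntegrable U, weightPhi U θ x ≠ ⊤) ↔ specWeight θ ≠ ⊤) := by
  -- Part (i)
  have hI : ∀ a : H →L[ℂ] H, Csq U a ≠ ⊤ →
      weightPhi U θ (star a * a) ≤ Csq U a * specWeight θ := by
    intro a _
    rw [weightPhi, specWeight]
    refine iSup_le fun A => iSup_le fun N => ?_
    calc ∑ n ∈ Finset.range N,
          ∫⁻ t : ℝ, ENNReal.ofReal (⟪θ A.1 n, (U t * (star a * a) * star (U t)) (θ A.1 n)⟫_ℂ).re
        = ∑ n ∈ Finset.range N, ∫⁻ t : ℝ, (‖a (star (U t) (θ A.1 n))‖₊ : ℝ≥0∞) ^ 2 := by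
          refine Finset.sum_congr rfl fun n _ => ?_
          exact lintegral_congr fun t => integrand_eq U a (θ A.1 n) t
      _ ≤ ∑ n ∈ Finset.range N, Csq U a * (‖θ A.1 n‖₊ : ℝ≥0∞) ^ 2 :=
          Finset.sum_le_sum fun n _ => csq_bound U a (θ A.1 n)
      _ = Csq U a * ∑ n ∈ Finset.range N, (‖θ A.1 n‖₊ : ℝ≥0∞) ^ 2 := (Finset.mul_sum _ _ _).symm
      _ ≤ Csq U a * ⨆ (A : {A : Set ℝ // IsCompact A}) (N : ℕ), ∑ n ∈ Finset.range N,
            (‖θ A.1 n‖₊ : ℝ≥0∞) ^ 2 := by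
          gcongr
          exact le_iSup₂ (f := fun (A : {A : Set ℝ // IsCompact A}) (N : ℕ) =>
            ∑ n ∈ Finset.range N, (‖θ A.1 n‖₊ : ℝ≥0∞) ^ 2) A N
  -- Part (ii)
  have hII : ∀ f : ℝ → ℝ, Measurable f → 0 ≤ f → Integrable f → (∃ C : ℝ, ∀ s, |f s| ≤ C) →
      ∀ Ef : H →L[ℂ] H,
        (∀ ψ ψ' : H, ⟪ψ, Ef ψ'⟫_ℂ
            = ∫ s : ℝ, (f s : ℂ) * ⟪(W ψ : Lp F 2 (volume : Measure ℝ)) s,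
                (W ψ' : Lp F 2 (volume : Measure ℝ)) s⟫_ℂ) →
        weightPhi U θ Ef = ENNReal.ofReal (∫ s : ℝ, f s) * specWeight θ := by
    rintro f hfm hf0 hfi ⟨C, hfb⟩ Ef hEf
    rw [weightPhi, specWeight]
    have key := core_lintegral U hU0 hUadd hUuni Λ hΛ W hWiso hWU f hfm hf0 hfi C hfb Ef hEf
    calc (⨆ (A : {A : Set ℝ // IsCompact A}) (N : ℕ), ∑ n ∈ Finset.range N,
          ∫⁻ t : ℝ, ENNReal.ofReal (⟪θ A.1 n, (U t * Ef * star (U t)) (θ A.1 n)⟫_ℂ).re)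
        = ⨆ (A : {A : Set ℝ // IsCompact A}) (N : ℕ), ENNReal.ofReal (∫ s : ℝ, f s) *
            ∑ n ∈ Finset.range N, (‖θ A.1 n‖₊ : ℝ≥0∞) ^ 2 := by
          refine iSup_congr fun A => iSup_congr fun N => ?_
          rw [Finset.mul_sum]
          exact Finset.sum_congr rfl fun n _ => key (θ A.1 n)
      _ = ENNReal.ofReal (∫ s : ℝ, f s) * ⨆ (A : {A : Set ℝ // IsCompact A}) (N : ℕ),
            ∑ n ∈ Finset.range N, (‖θ A.1 n‖₊ : ℝ≥0∞) ^ 2 := by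
          simp_rw [ENNReal.mul_iSup]
  refine ⟨hI, hII, ?_⟩
  -- Part (iii)
  constructor
  · -- forward direction
    intro hfin
    set f0 : ℝ → ℝ := (Set.Icc (0:ℝ) 1).indicator (fun _ => (1:ℝ)) with hf0def
    have hfm1 : Measurable f0 := measurable_const.indicator measurableSet_Icc
    have hfb1 : ∀ s, |f0 s| ≤ 1 := by
      intro s
      rw [hf0def]
      by_cases hs : s ∈ Set.Icc (0:ℝ) 1 <;> simp [Set.indicator, hs]
    have hf01 : 0 ≤ f0 := fun s => Set.indicator_nonneg (fun _ _ => zero_le_one) s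
    have hfi1 : Integrable f0 volume := by
      rw [hf0def, integrable_indicator_iff measurableSet_Icc]
      exact integrableOn_const (by simp [Real.volume_Icc])
    have hr : ∫ s : ℝ, f0 s = 1 := by
      rw [hf0def, integral_indicator_const (1:ℝ) measurableSet_Icc]
      simp [Real.volume_Icc]
    set Mf := mulOp (F := F) f0 hfm1 hfb1 with hMfdef
    set Ef : H →L[ℂ] H := (ContinuousLinearMap.adjoint W) ∘L (Mf ∘L W) with hEfdef'
    have hEfdef : ∀ ψ ψ' : H, ⟪ψ, Ef ψ'⟫_ℂ
        = ∫ s : ℝ, (f0 s : ℂ) * ⟪(W ψ : Lp F 2 (volume : Measure ℝ)) s,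
            (W ψ' : Lp F 2 (volume : Measure ℝ)) s⟫_ℂ := by
      intro ψ ψ'
      have e1 : Ef ψ' = (ContinuousLinearMap.adjoint W) (Mf (W ψ')) := rfl
      rw [e1, ContinuousLinearMap.adjoint_inner_right, L2.inner_def]
      apply integral_congr_ae
      filter_upwards [mulOp_coeFn f0 hfm1 hfb1 (W ψ')] with s hs
      rw [hs, inner_smul_right]
    have hEfreal : ∀ x : H, ⟪x, Ef x⟫_ℂ
        = ((∫ s : ℝ, f0 s * ‖(W x : Lp F 2 (volume : Measure ℝ)) s‖ ^ 2 : ℝ) : ℂ) := by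
      intro x
      rw [hEfdef x x]
      rw [show (∫ s : ℝ, (f0 s : ℂ) * ⟪(W x : Lp F 2 (volume : Measure ℝ)) s,
          (W x : Lp F 2 (volume : Measure ℝ)) s⟫_ℂ)
          = ∫ s : ℝ, ((f0 s * ‖(W x : Lp F 2 (volume : Measure ℝ)) s‖ ^ 2 : ℝ) : ℂ) by
        refine integral_congr_ae (Filter.Eventually.of_forall fun s => ?_)
        dsimp only
        rw [show ⟪(W x : Lp F 2 (volume : Measure ℝ)) s,
            (W x : Lp F 2 (volume : Measure ℝ)) s⟫_ℂ
            = ((‖(W x : Lp F 2 (volume : Measure ℝ)) s‖ ^ 2 : ℝ) : ℂ) by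
          exact_mod_cast inner_self_eq_norm_sq_to_K _]
        norm_cast]
      exact integral_ofReal
    have hpos : (0 : H →L[ℂ] H) ≤ Ef := by
      rw [ContinuousLinearMap.nonneg_iff_isPositive, ContinuousLinearMap.isPositive_iff_complex]
      intro x
      have hxr : 0 ≤ ∫ s : ℝ, f0 s * ‖(W x : Lp F 2 (volume : Measure ℝ)) s‖ ^ 2 :=
        integral_nonneg fun s => mul_nonneg (hf01 s) (sq_nonneg _)
      have hx2 : ⟪Ef x, x⟫_ℂ
          = ((∫ s : ℝ, f0 s * ‖(W x : Lp F 2 (volume : Measure ℝ)) s‖ ^ 2 : ℝ) : ℂ) := by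
        rw [← inner_conj_symm, hEfreal x, Complex.conj_ofReal]
      rw [hx2]
      constructor
      · simp
      · simpa using hxr
    set a : H →L[ℂ] H := CFC.sqrt Ef with hadef
    have hEq : star a * a = Ef := by
      rw [(IsSelfAdjoint.of_nonneg (CFC.sqrt_nonneg (a := Ef))).star_eq]
      exact CFC.sqrt_mul_sqrt_self Ef hpos
    have hCsq : Csq U a ≤ ENNReal.ofReal (∫ s : ℝ, f0 s) := by
      rw [Csq]
      refine iSup_le fun ψ => ?_
      have e : ∀ t : ℝ, (‖a (star (U t) (ψ : H))‖₊ : ℝ≥0∞) ^ 2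
          = ENNReal.ofReal (⟪(ψ : H), (U t * Ef * star (U t)) (ψ : H)⟫_ℂ).re := by
        intro t
        rw [← hEq]
        exact (integrand_eq U a (ψ : H) t).symm
      simp_rw [e]
      rw [core_lintegral U hU0 hUadd hUuni Λ hΛ W hWiso hWU f0 hfm1 hf01 hfi1 1 hfb1
        Ef hEfdef (ψ : H)]
      have hn : (‖(ψ : H)‖₊ : ℝ≥0∞) = 1 := by
        have h1 : ‖(ψ : H)‖₊ = 1 := by ext; simp [coe_nnnorm, ψ.2]
        rw [h1]; rfl
      rw [hn]
      simp
    have hCne : Csq U a ≠ ⊤ := ne_top_of_le_ne_top ENNReal.ofReal_ne_top hCsq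
    have hmem : Ef ∈ posTIntegrable U := ⟨a, hCne, hEq.symm⟩
    have hfin' := hfin Ef hmem
    rw [hII f0 hfm1 hf01 hfi1 ⟨1, hfb1⟩ Ef hEfdef, hr] at hfin'
    simpa using hfin'
  · -- reverse direction
    intro hS x hx
    obtain ⟨a, ha, rfl⟩ := hx
    exact ne_top_of_le_ne_top (ENNReal.mul_ne_top ha hS) (hI a ha)


end
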